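/- Let $a < b$ and $a_0, b_0, c_1, c_2 \in \mathbb{R}$, and let $\hat u : \mathbb{R} \to \mathbb{R}$ be continuously differentiable. Define $$u(x) = e^{2x/(a-b)} (x-a)^2 \big( (x-b)^2 \hat u(x) + c_2 \big) + c_1 + \frac{b_0-a_0}{2(b-a)}(x-a)^2 + a_0 x.$$ Then $u'(a) = a_0$ and $u'(b) = b_0$. -/

import Mathlib

theorem stmt_6 (a b a0 b0 c1 c2 : ℝ) (hab : a < b)
    (uhat : ℝ → ℝ) (hu : ContDiff ℝ 1 uhat) (u : ℝ → ℝ)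
    (hdef : ∀ x, u x = Real.exp (2 * x / (a - b)) * (x - a) ^ 2 * ((x - b) ^ 2 * uhat x + c2)
      + c1 + (b0 - a0) / (2 * (b - a)) * (x - a) ^ 2 + a0 * x) :
    deriv u a = a0 ∧ deriv u b = b0 := by
  have hba : b - a ≠ 0 := sub_ne_zero.2 hab.ne'
  have hu' : Differentiable ℝ uhat := hu.differentiable one_ne_zero
  have key : ∀ x : ℝ, HasDerivAt u
      ((Real.exp (2 * x / (a - b)) * (2 / (a - b)) * (x - a) ^ 2
        + Real.exp (2 * x / (a - b)) * (2 * (x - a))) * ((x - b) ^ 2 * uhat x + c2)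
      + Real.exp (2 * x / (a - b)) * (x - a) ^ 2
        * (2 * (x - b) * uhat x + (x - b) ^ 2 * deriv uhat x)
      + (b0 - a0) / (2 * (b - a)) * (2 * (x - a)) + a0) x := by
    intro x
    have hEq : u = fun x => Real.exp (2 * x / (a - b)) * (x - a) ^ 2
        * ((x - b) ^ 2 * uhat x + c2)
        + c1 + (b0 - a0) / (2 * (b - a)) * (x - a) ^ 2 + a0 * x := funext hdef
    rw [hEq]
    have h1 : HasDerivAt (fun x : ℝ => 2 * x / (a - b)) (2 / (a - b)) x := by
      simpa using ((hasDerivAt_id x).const_mul 2).div_const (a - b)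
    have he : HasDerivAt (fun x : ℝ => Real.exp (2 * x / (a - b)))
        (Real.exp (2 * x / (a - b)) * (2 / (a - b))) x := h1.exp
    have hpa : HasDerivAt (fun x : ℝ => (x - a) ^ 2) (2 * (x - a)) x := by
      simpa [mul_comm] using ((hasDerivAt_id x).sub_const a).fun_pow 2
    have hpb : HasDerivAt (fun x : ℝ => (x - b) ^ 2) (2 * (x - b)) x := by
      simpa [mul_comm] using ((hasDerivAt_id x).sub_const b).fun_pow 2
    have hq : HasDerivAt (fun x : ℝ => (x - b) ^ 2 * uhat x + c2)
        (2 * (x - b) * uhat x + (x - b) ^ 2 * deriv uhat x) x :=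
      (hpb.mul (hu' x).hasDerivAt).add_const c2
    have := (((he.fun_mul hpa).fun_mul hq).add_const c1).fun_add
      ((hpa.const_mul ((b0 - a0) / (2 * (b - a))))) |>.fun_add ((hasDerivAt_id x).const_mul a0)
    refine this.congr_deriv ?_
    ring
  constructor
  · have := (key a).deriv
    rw [this]
    ring
  · have := (key b).deriv
    rw [this]
    have hab' : a - b ≠ 0 := sub_ne_zero.2 hab.ne
    field_simp
    ring
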